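/- Let (α_i, β_i, γ_i) and (α'_i, β'_i, γ'_i) (i = 1,2,3) be two triples of real numbers with α_i + β_i + γ_i = π and α'_i + β'_i + γ'_i = π for each i. Suppose both families produce the same values under the shaped 3–2 Pachner move formulas, i.e. β_2 + γ_1 = β'_2 + γ'_1, β_1 + γ_3 = β'_1 + γ'_3, β_3 + γ_2 = β'_3 + γ'_2, β_1 + γ_2 = β'_1 + γ'_2, β_3 + γ_1 = β'_3 + γ'_1, and β_2 + γ_3 = β'_2 + γ'_3. Then there exists a real number s such that for all i = 1,2,3: α'_i = α_i, β'_i = β_i + s, and γ'_i = γ_i − s; in particular the two families are gauge equivalent. -/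
import Mathlib


open Real

/-- Two families of angle triples, each triple summing to `π`, that
produce the same angles under the shaped 3-2 Pachner move formulas are gauge
equivalent: there is `s ∈ ℝ` with `α'ᵢ = αᵢ`, `β'ᵢ = βᵢ + s`, `γ'ᵢ = γᵢ − s`
for `i = 1, 2, 3`. -/
theorem pachner32_gauge_equivalence
    (α₁ α₂ α₃ β₁ β₂ β₃ γ₁ γ₂ γ₃ : ℝ)
    (α₁' α₂' α₃' β₁' β₂' β₃' γ₁' γ₂' γ₃' : ℝ)
    (h1 : α₁ + β₁ + γ₁ = π)
    (h2 : α₂ + β₂ + γ₂ = π)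
    (h3 : α₃ + β₃ + γ₃ = π)
    (h1' : α₁' + β₁' + γ₁' = π)
    (h2' : α₂' + β₂' + γ₂' = π)
    (h3' : α₃' + β₃' + γ₃' = π)
    (e1 : β₂ + γ₁ = β₂' + γ₁')
    (e2 : β₁ + γ₃ = β₁' + γ₃')
    (e3 : β₃ + γ₂ = β₃' + γ₂')
    (e4 : β₁ + γ₂ = β₁' + γ₂')
    (e5 : β₃ + γ₁ = β₃' + γ₁')
    (e6 : β₂ + γ₃ = β₂' + γ₃') :
    ∃ s : ℝ,
      (α₁' = α₁ ∧ β₁' = β₁ + s ∧ γ₁' = γ₁ - s) ∧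
      (α₂' = α₂ ∧ β₂' = β₂ + s ∧ γ₂' = γ₂ - s) ∧
      (α₃' = α₃ ∧ β₃' = β₃ + s ∧ γ₃' = γ₃ - s) := by
  exact ⟨β₁' - β₁, ⟨by linarith, by linarith, by linarith⟩, ⟨by linarith, by linarith, by linarith⟩, ⟨by linarith, by linarith, by linarith⟩⟩
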